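/- Let I ⊆ ℝ be an open interval, ξ : ℝ → ℝ, and W, D : ℝ → ℂ be functions such that for every t ∈ I: Im(W t) > 0, D t ≠ 0, W has derivative 2/(W t − ξ t) at t, and D has derivative −2·D t/(W t − ξ t)² at t. Define S(t) := (1/2π)·( log(2·Im(W t)) − log|D t| ) and P(t) := −(1/π)·Im(1/(W t − ξ t)). Then for every t ∈ I, the function S has derivative −2π·(P(t))² at t. -/

import Mathlib

/-- Regularized Green function on the diagonal (log of the conformal radius) in the
half-plane chart: `S(t) = (1/2π)·(log(2·Im(W t)) - log|D t|)`, where `D t = g_t'(w)`. -/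
noncomputable def CradT (W D : ℝ → ℂ) (t : ℝ) : ℝ :=
  (1 / (2 * Real.pi)) * (Real.log (2 * (W t).im) - Real.log ‖D t‖)

/-- Poisson kernel at the tip in the half-plane chart:
`P(t) = -(1/π)·Im(1/(W t - ξ t))`. -/
noncomputable def PoisT (ξ : ℝ → ℝ) (W : ℝ → ℂ) (t : ℝ) : ℝ :=
  -(1 / Real.pi) * ((W t - (ξ t : ℂ))⁻¹).im

lemma im_hasDerivAt {f : ℝ → ℂ} {f' : ℂ} {t : ℝ} (h : HasDerivAt f f' t) :
    HasDerivAt (fun s => (f s).im) f'.im t :=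
  (Complex.imCLM.hasFDerivAt.comp_hasDerivAt t h)

lemma re_hasDerivAt {f : ℝ → ℂ} {f' : ℂ} {t : ℝ} (h : HasDerivAt f f' t) :
    HasDerivAt (fun s => (f s).re) f'.re t :=
  (Complex.reCLM.hasFDerivAt.comp_hasDerivAt t h)

lemma log_abs_hasDerivAt {f : ℝ → ℂ} {f' : ℂ} {t : ℝ} (h : HasDerivAt f f' t)
    (hf : f t ≠ 0) :
    HasDerivAt (fun s => Real.log ‖f s‖) ((f' / f t).re) t := by
  have heq : (fun s => Real.log ‖f s‖)
      = fun s => Real.log (Complex.normSq (f s)) / 2 := by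
    funext s
    rw [Complex.norm_def, Real.log_sqrt (Complex.normSq_nonneg _)]
  have hre := re_hasDerivAt h
  have him := im_hasDerivAt h
  have hns : HasDerivAt (fun s => Complex.normSq (f s))
      (2 * (f t).re * f'.re + 2 * (f t).im * f'.im) t := by
    have : HasDerivAt (fun s => (f s).re ^ 2 + (f s).im ^ 2)
        (2 * (f t).re ^ 1 * f'.re + 2 * (f t).im ^ 1 * f'.im) t :=
      ((hre.pow 2).add (him.pow 2))
    simp only [pow_one] at this
    convert this using 2 <;> simp [Complex.normSq_apply, sq]
  have hns0 : Complex.normSq (f t) ≠ 0 := by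
    simpa [Complex.normSq_eq_zero] using hf
  have hlog := (hns.log hns0).div_const 2
  rw [heq]
  refine hlog.congr_deriv (Eq.symm ?_)
  rw [Complex.div_re]
  field_simp

/-- **on-diagonal Hadamard formula.** Let `I ⊆ ℝ` be an open interval,
`ξ : ℝ → ℝ`, and `W, D : ℝ → ℂ` be such that for every `t ∈ I`: `Im(W t) > 0`,
`D t ≠ 0`, `W' t = 2/(W t - ξ t)` and `D' t = -2·D t/(W t - ξ t)²`. Then for every
`t ∈ I` the function `S(t) = (1/2π)·(log(2·Im(W t)) - log|D t|)` has derivative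
`-2π·(P(t))²` at `t`. -/
theorem statement14 (I : Set ℝ) (hIopen : IsOpen I) (hIconn : I.OrdConnected)
    (ξ : ℝ → ℝ) (W D : ℝ → ℂ)
    (hW : ∀ t ∈ I, 0 < (W t).im) (hD : ∀ t ∈ I, D t ≠ 0)
    (hW' : ∀ t ∈ I, HasDerivAt W (2 / (W t - (ξ t : ℂ))) t)
    (hD' : ∀ t ∈ I, HasDerivAt D (-2 * D t / (W t - (ξ t : ℂ)) ^ 2) t) :
    ∀ t ∈ I, HasDerivAt (CradT W D) (-(2 * Real.pi) * (PoisT ξ W t) ^ 2) t := by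
  intro t ht
  set z : ℂ := W t - (ξ t : ℂ) with hz
  have hb : 0 < z.im := by simpa [hz] using hW t ht
  have hz0 : z ≠ 0 := by
    intro h; rw [h] at hb; simp at hb
  have him2 : (0:ℝ) < 2 * (W t).im := mul_pos two_pos (hW t ht)
  -- derivative of log (2 * im W)
  have h1 : HasDerivAt (fun s => 2 * (W s).im) (2 * (2 / z).im) t :=
    (im_hasDerivAt (hW' t ht)).const_mul 2
  have h2 : HasDerivAt (fun s => Real.log (2 * (W s).im))
      (2 * (2 / z).im / (2 * (W t).im)) t := h1.log (ne_of_gt him2)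
  -- derivative of log |D|
  have h3 : HasDerivAt (fun s => Real.log ‖D s‖)
      (((-2 * D t / z ^ 2) / D t).re) t :=
    log_abs_hasDerivAt (hD' t ht) (hD t ht)
  have h4 := (h2.sub h3).const_mul (1 / (2 * Real.pi))
  have hCrad : CradT W D = fun s =>
      (1 / (2 * Real.pi)) * (Real.log (2 * (W s).im) - Real.log ‖D s‖) := rfl
  rw [hCrad]
  refine h4.congr_deriv (Eq.symm ?_)
  -- now the algebra
  have hdiv : (-2 * D t / z ^ 2) / D t = -2 / z ^ 2 := by
    field_simp [hD t ht]
  rw [hdiv]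
  have hWim : (W t).im = z.im := by simp [hz]
  rw [hWim]
  have hns : Complex.normSq z ≠ 0 := by simpa [Complex.normSq_eq_zero] using hz0
  have hns2 : Complex.normSq (z ^ 2) = (Complex.normSq z) ^ 2 := by
    simp [sq, Complex.normSq_mul]
  have hpi : Real.pi ≠ 0 := Real.pi_ne_zero
  have hn : (0:ℝ) < z.re ^ 2 + z.im ^ 2 :=
    add_pos_of_nonneg_of_pos (sq_nonneg _) (pow_pos hb 2)
  have e1 : (2 / z).im = -2 * z.im / (z.re ^ 2 + z.im ^ 2) := by
    simp [Complex.div_im, Complex.normSq_apply, sq]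
    ring
  have e2 : ((-2 : ℂ) / z ^ 2).re = -2 * (z.re ^ 2 - z.im ^ 2) / ((z.re ^ 2 + z.im ^ 2) ^ 2) := by
    simp [Complex.div_re, Complex.normSq_apply, sq, Complex.mul_re, Complex.mul_im]
    ring
  have e3 : (z⁻¹).im = -z.im / (z.re ^ 2 + z.im ^ 2) := by
    simp [Complex.inv_im, Complex.normSq_apply, sq]
  simp only [PoisT, ← hz, e1, e2, e3]
  field_simp
  ring
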